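/- arXiv:2506.09454 — 10 statements merged into one kernel-verified Lean document; each statement's English description precedes it below -/
import Mathlib

section
/- Fix N ≥ 1, a label y ∈ {1,…,N}, and o ∈ ℝ^N. Suppose that for every t ∈ [0,1] the matrix (1/N)·I_N − ∇²ℓ_y(t·o) is positive semidefinite, where ∇²ℓ_y(ξ) is the Hessian of the softmax loss, i.e. (∇²ℓ_y(ξ))_{ij} = p_i(ξ)(𝟙[i=j] − p_j(ξ)) with p_j(ξ) = exp(ξ_j)/Σ_k exp(ξ_k). Then the softmax loss is bounded above by its second-order Taylor surrogate with curvature matrix (1/N)I_N: −log( exp(o_y)/Σ_{k=1}^N exp(o_k) ) ≤ log N − o_y + (1/N)·Σ_{j=1}^N o_j + (1/(2N))·Σ_{j=1}^N o_j². -/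
open Matrix

/-- The softmax probability `p_j(o) = exp(o_j) / ∑_k exp(o_k)`. -/
noncomputable def softmaxP (N : ℕ) (o : Fin N → ℝ) (j : Fin N) : ℝ :=
  Real.exp (o j) / ∑ k, Real.exp (o k)

/-- fix `N ≥ 1`, a label `y` and `o ∈ ℝ^N`.  If for every `t ∈ [0,1]` the
matrix `(1/N) I_N - ∇²ℓ_y(t·o)` is positive semidefinite, where
`(∇²ℓ_y(ξ))_{ij} = p_i(ξ)(𝟙[i=j] - p_j(ξ))`, then the softmax loss is bounded above by
its second-order Taylor surrogate with curvature matrix `(1/N) I_N`: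
`-log(exp(o_y)/∑_k exp(o_k)) ≤ log N - o_y + (1/N) ∑_j o_j + (1/(2N)) ∑_j o_j²`. -/
theorem softmax_rg2_upper_bound (N : ℕ) (hN : 1 ≤ N) (y : Fin N) (o : Fin N → ℝ)
    (hpsd : ∀ t ∈ Set.Icc (0 : ℝ) 1,
      (((1 : ℝ) / N) • (1 : Matrix (Fin N) (Fin N) ℝ)
        - Matrix.of (fun i j => softmaxP N (t • o) i *
            ((if i = j then (1 : ℝ) else 0) - softmaxP N (t • o) j))).PosSemidef) :
    - Real.log (Real.exp (o y) / ∑ k, Real.exp (o k)) ≤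
      Real.log N - o y + (1 / N) * ∑ j, o j + (1 / (2 * N)) * ∑ j, o j ^ 2 := by
  haveI : Nonempty (Fin N) := ⟨y⟩
  set S : ℝ → ℝ := fun t => ∑ k, Real.exp (t * o k) with hSdef
  set D : ℝ → ℝ := fun t => ∑ k, o k * Real.exp (t * o k) with hDdef
  set E : ℝ → ℝ := fun t => ∑ k, o k ^ 2 * Real.exp (t * o k) with hEdef
  have hSpos : ∀ t, 0 < S t := fun t =>
    Finset.sum_pos (fun k _ => Real.exp_pos _) Finset.univ_nonempty
  have hSne : ∀ t, S t ≠ 0 := fun t => (hSpos t).ne'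
  have hterm : ∀ (t : ℝ) (k : Fin N), HasDerivAt (fun s => Real.exp (s * o k))
      (Real.exp (t * o k) * o k) t := by
    intro t k
    simpa using ((hasDerivAt_id t).mul_const (o k)).exp
  have hSderiv : ∀ t, HasDerivAt S (D t) t := by
    intro t
    have : HasDerivAt S (∑ k, Real.exp (t * o k) * o k) t :=
      HasDerivAt.fun_sum fun k _ => hterm t k
    convert this using 1
    exact Finset.sum_congr rfl fun k _ => by ring
  have hDderiv : ∀ t, HasDerivAt D (E t) t := by
    intro t
    have : HasDerivAt D (∑ k, o k * (Real.exp (t * o k) * o k)) t :=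
      HasDerivAt.fun_sum fun k _ => (hterm t k).const_mul (o k)
    convert this using 1
    exact Finset.sum_congr rfl fun k _ => by ring
  set c : ℝ := (1 / N) * ∑ j, o j ^ 2 with hcdef
  -- the second-derivative bound from PSD
  have hbound : ∀ t ∈ Set.Icc (0:ℝ) 1, (E t * S t - D t * D t) / S t ^ 2 ≤ c := by
    intro t ht
    have hP := (hpsd t ht).dotProduct_mulVec_nonneg o
    set p : Fin N → ℝ := softmaxP N (t • o) with hpdef
    have hp : ∀ i, p i = Real.exp (t * o i) / S t := by
      intro i
      simp [hpdef, softmaxP, hSdef, Pi.smul_apply, smul_eq_mul]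
    have key : ∀ i, (∑ j, p i * ((if i = j then (1:ℝ) else 0) - p j) * o j)
        = p i * o i - p i * ∑ j, p j * o j := by
      intro i
      have h1 : ∀ j, p i * ((if i = j then (1:ℝ) else 0) - p j) * o j
          = (if i = j then p i * o j else 0) - p i * (p j * o j) := by
        intro j; by_cases h : i = j <;> simp [h] <;> ring
      rw [Finset.sum_congr rfl fun j _ => h1 j, Finset.sum_sub_distrib,
        Finset.sum_ite_eq, ← Finset.mul_sum]
      simp
    have hquad : star o ⬝ᵥ ((((1 : ℝ) / N) • (1 : Matrix (Fin N) (Fin N) ℝ)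
        - Matrix.of (fun i j => p i * ((if i = j then (1 : ℝ) else 0) - p j))) *ᵥ o)
        = (1 / N) * ∑ i, o i ^ 2 - ((∑ i, p i * o i ^ 2) - (∑ i, p i * o i) ^ 2) := by
      rw [star_trivial, Matrix.sub_mulVec, dotProduct_sub,
        Matrix.smul_mulVec, Matrix.one_mulVec, dotProduct_smul]
      congr 1
      · simp [dotProduct, smul_eq_mul, Finset.mul_sum, sq]
      · simp only [Matrix.mulVec, dotProduct, Matrix.of_apply]
        rw [Finset.sum_congr rfl fun i _ => by rw [key i]]
        rw [Finset.sum_congr rfl fun i (_ : i ∈ Finset.univ) =>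
          (mul_sub (o i) (p i * o i) (p i * ∑ j, p j * o j)), Finset.sum_sub_distrib]
        congr 1
        · exact Finset.sum_congr rfl fun i _ => by ring
        · rw [Finset.sum_congr rfl fun i (_ : i ∈ Finset.univ) =>
            (show o i * (p i * ∑ j, p j * o j) = (p i * o i) * ∑ j, p j * o j by ring),
            ← Finset.sum_mul, sq]
    rw [hquad] at hP
    have h2 : ∑ i, p i * o i ^ 2 = E t / S t := by
      rw [hEdef]
      simp only []
      rw [Finset.sum_div]
      refine Finset.sum_congr rfl fun i _ => ?_
      rw [hp i]; ring
    have h3 : ∑ i, p i * o i = D t / S t := by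
      rw [hDdef]
      simp only []
      rw [Finset.sum_div]
      refine Finset.sum_congr rfl fun i _ => ?_
      rw [hp i]; ring
    have h4 : (E t * S t - D t * D t) / S t ^ 2
        = (∑ i, p i * o i ^ 2) - (∑ i, p i * o i) ^ 2 := by
      rw [h2, h3]
      field_simp
    rw [h4, hcdef]
    linarith
  -- now the Taylor / monotonicity argument
  set g : ℝ → ℝ := fun t => Real.log (S t) - t * o y with hgdef
  have hgderiv : ∀ t, HasDerivAt g (D t / S t - o y) t := by
    intro t
    have h1 : HasDerivAt (fun s : ℝ => s * o y) (o y) t := by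
      simpa using (hasDerivAt_id t).mul_const (o y)
    exact ((hSderiv t).log (hSne t)).sub h1
  have hφderiv : ∀ t, HasDerivAt (fun s => D s / S s)
      ((E t * S t - D t * D t) / S t ^ 2) t := by
    intro t
    exact (hDderiv t).div (hSderiv t) (hSne t)
  set ψ : ℝ → ℝ := fun t => D t / S t - D 0 / S 0 - c * t with hψdef
  have hψderiv : ∀ t, HasDerivAt ψ ((E t * S t - D t * D t) / S t ^ 2 - c) t := by
    intro t
    have h1 : HasDerivAt (fun s : ℝ => c * s) (c * 1) t := (hasDerivAt_id t).const_mul c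
    simpa [hψdef] using ((hφderiv t).sub_const (D 0 / S 0)).fun_sub h1
  have hψanti : AntitoneOn ψ (Set.Icc 0 1) := by
    apply antitoneOn_of_deriv_nonpos (convex_Icc 0 1)
    · exact fun x _ => (hψderiv x).continuousAt.continuousWithinAt
    · exact fun x _ => (hψderiv x).differentiableAt.differentiableWithinAt
    · intro x hx
      rw [interior_Icc] at hx
      rw [(hψderiv x).deriv]
      have := hbound x ⟨le_of_lt hx.1, le_of_lt hx.2⟩
      linarith
  have hψnonpos : ∀ t ∈ Set.Icc (0:ℝ) 1, ψ t ≤ 0 := by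
    intro t ht
    have h0 : ψ 0 = 0 := by simp [hψdef]
    have := hψanti (Set.left_mem_Icc.mpr zero_le_one) ht ht.1
    linarith
  set h : ℝ → ℝ := fun t => g t - (D 0 / S 0 - o y) * t - c / 2 * t ^ 2 with hhdef
  have hhderiv : ∀ t, HasDerivAt h (ψ t) t := by
    intro t
    have h1 : HasDerivAt (fun s : ℝ => (D 0 / S 0 - o y) * s) (D 0 / S 0 - o y) t := by
      simpa using (hasDerivAt_id t).const_mul (D 0 / S 0 - o y)
    have h2 : HasDerivAt (fun s : ℝ => c / 2 * s ^ 2) (c / 2 * (2 * t)) t := by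
      simpa using (hasDerivAt_pow 2 t).const_mul (c / 2)
    have : HasDerivAt h _ t := ((hgderiv t).fun_sub h1).fun_sub h2
    convert this using 1
    simp [hψdef]
    ring
  have hhanti : AntitoneOn h (Set.Icc 0 1) := by
    apply antitoneOn_of_deriv_nonpos (convex_Icc 0 1)
    · exact fun x _ => (hhderiv x).continuousAt.continuousWithinAt
    · exact fun x _ => (hhderiv x).differentiableAt.differentiableWithinAt
    · intro x hx
      rw [interior_Icc] at hx
      rw [(hhderiv x).deriv]
      exact hψnonpos x ⟨le_of_lt hx.1, le_of_lt hx.2⟩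
  have hfin : h 1 ≤ h 0 :=
    hhanti (Set.left_mem_Icc.mpr zero_le_one) (Set.right_mem_Icc.mpr zero_le_one) zero_le_one
  -- evaluate everything
  have hS0 : S 0 = N := by simp [hSdef]
  have hD0 : D 0 = ∑ j, o j := by simp [hDdef]
  have hS1 : S 1 = ∑ k, Real.exp (o k) := by simp [hSdef]
  have hlhs : - Real.log (Real.exp (o y) / ∑ k, Real.exp (o k))
      = Real.log (S 1) - o y := by
    rw [hS1, Real.log_div (Real.exp_ne_zero _) (by rw [← hS1]; exact hSne 1), Real.log_exp]
    ring
  have hNpos : (0:ℝ) < N := by exact_mod_cast Nat.lt_of_lt_of_le Nat.zero_lt_one hN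
  have hh1 : h 1 = Real.log (S 1) - o y - ((∑ j, o j) / N - o y) - c / 2 := by
    simp only [hhdef, hgdef]
    rw [hS0, hD0]
    ring
  have hh0 : h 0 = Real.log N := by
    simp [hhdef, hgdef, hS0]
  rw [hh1, hh0] at hfin
  rw [hlhs, hcdef] at *
  have e1 : ((1:ℝ) / N * ∑ j, o j ^ 2) / 2 = 1 / (2 * N) * ∑ j, o j ^ 2 := by ring
  have e2 : (∑ j, o j) / (N:ℝ) = 1 / N * ∑ j, o j := by ring
  linarith [hfin]
end

section
/- Let N ≥ 1, let c, f, g : {1,…,N} → ℝ with c_j ≥ 0 for all j, and let π, σ be permutations of {1,…,N}. If π maximizes the c-weighted sum of f over all permutations, i.e. Σ_{j=1}^N c_{π(j)} f_j ≥ Σ_{j=1}^N c_{τ(j)} f_j for every permutation τ, then Σ_{j=1}^N c_{σ(j)} g_j − Σ_{j=1}^N c_{π(j)} g_j ≤ ( 2 Σ_{j=1}^N c_j² )^{1/2} · ( Σ_{j=1}^N (f_j − g_j)² )^{1/2}. -/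
/-- let `c, f, g : {1,…,N} → ℝ` with `c_j ≥ 0`, and let `π, σ` be
permutations of `{1,…,N}`.  If `π` maximizes the `c`-weighted sum of `f` over all
permutations, then
`∑_j c_{σ(j)} g_j - ∑_j c_{π(j)} g_j ≤ (2 ∑_j c_j²)^{1/2} (∑_j (f_j - g_j)²)^{1/2}`. -/
theorem dcg_suboptimality_bound (N : ℕ) (hN : 1 ≤ N) (c f g : Fin N → ℝ)
    (hc : ∀ j, 0 ≤ c j) (piPerm sigmaPerm : Equiv.Perm (Fin N))
    (hpi : ∀ tau : Equiv.Perm (Fin N), ∑ j, c (tau j) * f j ≤ ∑ j, c (piPerm j) * f j) :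
    ∑ j, c (sigmaPerm j) * g j - ∑ j, c (piPerm j) * g j ≤
      Real.sqrt (2 * ∑ j, c j ^ 2) * Real.sqrt (∑ j, (f j - g j) ^ 2) := by
  have h1 : ∑ j, c (sigmaPerm j) * g j - ∑ j, c (piPerm j) * g j ≤
      ∑ j, (c (sigmaPerm j) - c (piPerm j)) * (g j - f j) := by
    have := hpi sigmaPerm
    have : ∑ j, c (sigmaPerm j) * f j - ∑ j, c (piPerm j) * f j ≤ 0 := by linarith
    calc ∑ j, c (sigmaPerm j) * g j - ∑ j, c (piPerm j) * g j
        = ∑ j, (c (sigmaPerm j) - c (piPerm j)) * (g j - f j)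
          + (∑ j, c (sigmaPerm j) * f j - ∑ j, c (piPerm j) * f j) := by
          rw [← Finset.sum_sub_distrib, ← Finset.sum_sub_distrib, ← Finset.sum_add_distrib]
          congr 1; ext j; ring
      _ ≤ ∑ j, (c (sigmaPerm j) - c (piPerm j)) * (g j - f j) := by linarith
  have h2 : ∑ j, (c (sigmaPerm j) - c (piPerm j)) * (g j - f j) ≤
      Real.sqrt (∑ j, (c (sigmaPerm j) - c (piPerm j)) ^ 2) *
      Real.sqrt (∑ j, (g j - f j) ^ 2) :=
    Real.sum_mul_le_sqrt_mul_sqrt _ _ _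
  have hnormeq : (∑ j, (g j - f j) ^ 2) = ∑ j, (f j - g j) ^ 2 := by
    congr 1; ext j; ring
  have hperm : ∀ τ : Equiv.Perm (Fin N), ∑ j, c (τ j) ^ 2 = ∑ j, c j ^ 2 := fun τ =>
    Fintype.sum_equiv τ _ _ (fun _ => rfl)
  have h3 : ∑ j, (c (sigmaPerm j) - c (piPerm j)) ^ 2 ≤ 2 * ∑ j, c j ^ 2 := by
    have hcross : 0 ≤ ∑ j, c (sigmaPerm j) * c (piPerm j) :=
      Finset.sum_nonneg fun j _ => mul_nonneg (hc _) (hc _)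
    have : ∑ j, (c (sigmaPerm j) - c (piPerm j)) ^ 2 =
        ∑ j, c (sigmaPerm j) ^ 2 + ∑ j, c (piPerm j) ^ 2
          - 2 * ∑ j, c (sigmaPerm j) * c (piPerm j) := by
      rw [← Finset.sum_add_distrib, Finset.mul_sum, ← Finset.sum_sub_distrib]
      congr 1; ext j; ring
    rw [this, hperm, hperm]; linarith
  have h4 : Real.sqrt (∑ j, (c (sigmaPerm j) - c (piPerm j)) ^ 2) ≤
      Real.sqrt (2 * ∑ j, c j ^ 2) := Real.sqrt_le_sqrt h3
  calc ∑ j, c (sigmaPerm j) * g j - ∑ j, c (piPerm j) * g j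
      ≤ Real.sqrt (∑ j, (c (sigmaPerm j) - c (piPerm j)) ^ 2) *
        Real.sqrt (∑ j, (g j - f j) ^ 2) := h1.trans h2
    _ ≤ Real.sqrt (2 * ∑ j, c j ^ 2) * Real.sqrt (∑ j, (f j - g j) ^ 2) := by
        rw [hnormeq]
        exact mul_le_mul_of_nonneg_right h4 (Real.sqrt_nonneg _)
end

section
/- Let N ≥ 1, let c : {1,…,N} → ℝ with c_j ≥ 0, let f, f_B : {1,…,N} → ℝ, and define the surrogate risk Φ_B(f) = Σ_{j=1}^N (f_j − f_B(j))², whose minimum over all f is Φ_B* = 0. Let π be a permutation maximizing Σ_j c_{π(j)} f_j among all permutations, and let σ be a permutation maximizing Σ_j c_{σ(j)} f_B(j) among all permutations. Then the DCG regret satisfies ( −Σ_j c_{π(j)} f_B(j) ) − ( −Σ_j c_{σ(j)} f_B(j) ) ≤ ( 2 Σ_{j=1}^N c_j² )^{1/2} · ( Φ_B(f) − Φ_B* )^{1/2}; that is, the squared surrogate Φ_B is DCG-consistent with a quantitative square-root rate. -/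
/-- let `c_j ≥ 0`, let `f, f_B : {1,…,N} → ℝ`, and define the surrogate
risk `Φ_B(f) = ∑_j (f_j - f_B(j))²`, whose minimum over all `f` is `Φ_B* = 0`.  If `π`
maximizes `∑_j c_{π(j)} f_j` among permutations and `σ` maximizes `∑_j c_{σ(j)} f_B(j)`
among permutations, then the DCG regret satisfies
`(-∑_j c_{π(j)} f_B(j)) - (-∑_j c_{σ(j)} f_B(j)) ≤ (2∑_j c_j²)^{1/2} (Φ_B(f) - Φ_B*)^{1/2}`. -/
theorem squared_surrogate_dcg_consistency (N : ℕ) (hN : 1 ≤ N) (c f fB : Fin N → ℝ)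
    (hc : ∀ j, 0 ≤ c j) (piPerm sigmaPerm : Equiv.Perm (Fin N))
    (hpi : ∀ tau : Equiv.Perm (Fin N), ∑ j, c (tau j) * f j ≤ ∑ j, c (piPerm j) * f j)
    (hsigma : ∀ tau : Equiv.Perm (Fin N),
      ∑ j, c (tau j) * fB j ≤ ∑ j, c (sigmaPerm j) * fB j) :
    IsLeast {v : ℝ | ∃ g : Fin N → ℝ, v = ∑ j, (g j - fB j) ^ 2} 0 ∧
    (- ∑ j, c (piPerm j) * fB j) - (- ∑ j, c (sigmaPerm j) * fB j) ≤
      Real.sqrt (2 * ∑ j, c j ^ 2) * Real.sqrt ((∑ j, (f j - fB j) ^ 2) - 0) := by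
  constructor
  · constructor
    · exact ⟨fB, by simp⟩
    · rintro v ⟨g, rfl⟩
      exact Finset.sum_nonneg fun j _ => sq_nonneg _
  · set d : Fin N → ℝ := fun j => c (sigmaPerm j) - c (piPerm j) with hd
    have hdf : ∑ j, d j * f j ≤ 0 := by
      have := hpi sigmaPerm
      simp only [hd, sub_mul, Finset.sum_sub_distrib]
      linarith
    have hregret : (- ∑ j, c (piPerm j) * fB j) - (- ∑ j, c (sigmaPerm j) * fB j)
        = ∑ j, d j * fB j := by
      simp [hd, sub_mul, Finset.sum_sub_distrib]; ring
    have hstep : ∑ j, d j * fB j ≤ ∑ j, d j * (fB j - f j) := by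
      have : ∑ j, d j * (fB j - f j) = ∑ j, d j * fB j - ∑ j, d j * f j := by
        simp [mul_sub, Finset.sum_sub_distrib]
      linarith
    have hCS : (∑ j, d j * (fB j - f j)) ^ 2
        ≤ (∑ j, d j ^ 2) * ∑ j, (fB j - f j) ^ 2 := by
      exact Finset.sum_mul_sq_le_sq_mul_sq Finset.univ d (fun j => fB j - f j)
    have hd2 : ∑ j, d j ^ 2 ≤ 2 * ∑ j, c j ^ 2 := by
      have h1 : ∑ j, c (sigmaPerm j) ^ 2 = ∑ j, c j ^ 2 :=
        Equiv.sum_comp sigmaPerm (fun j => c j ^ 2)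
      have h2 : ∑ j, c (piPerm j) ^ 2 = ∑ j, c j ^ 2 :=
        Equiv.sum_comp piPerm (fun j => c j ^ 2)
      have h3 : ∑ j, d j ^ 2
          ≤ ∑ j, (c (sigmaPerm j) ^ 2 + c (piPerm j) ^ 2) := by
        apply Finset.sum_le_sum
        intro j _
        have := mul_nonneg (hc (sigmaPerm j)) (hc (piPerm j))
        simp only [hd]
        nlinarith
      rw [Finset.sum_add_distrib, h1, h2] at h3
      linarith
    have hΦ : (0:ℝ) ≤ ∑ j, (fB j - f j) ^ 2 :=
      Finset.sum_nonneg fun j _ => sq_nonneg _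
    have hsq : ∑ j, d j * (fB j - f j)
        ≤ Real.sqrt (2 * ∑ j, c j ^ 2) * Real.sqrt (∑ j, (fB j - f j) ^ 2) := by
      calc ∑ j, d j * (fB j - f j) ≤ Real.sqrt ((∑ j, d j * (fB j - f j)) ^ 2) := by
            rw [Real.sqrt_sq_eq_abs]; exact le_abs_self _
        _ ≤ Real.sqrt ((2 * ∑ j, c j ^ 2) * ∑ j, (fB j - f j) ^ 2) := by
            apply Real.sqrt_le_sqrt
            exact hCS.trans (mul_le_mul_of_nonneg_right hd2 hΦ)
        _ = _ := Real.sqrt_mul (by positivity) _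
    have heq : ∑ j, (fB j - f j) ^ 2 = (∑ j, (f j - fB j) ^ 2) - 0 := by
      simp only [sub_zero]
      exact Finset.sum_congr rfl fun j _ => by ring
    rw [hregret, ← heq]
    exact hstep.trans hsq
end

section
/- Let N ≥ 1, let P ⊊ {1,…,N} be a nonempty set of positive indices with nonempty complement, let r : {1,…,N} → ℝ satisfy γ := min_{j∈P} r_j − max_{j∉P} r_j > 0, and let w : {1,…,N} → ℝ with w_j ≥ w₀ > 0 for all j. If f : {1,…,N} → ℝ satisfies Σ_{j=1}^N w_j (f_j − r_j)² < w₀ γ² / 4, then f_j > f_{j'} for every j ∈ P and j' ∉ P; in particular, sorting f in decreasing order places all positive indices before all negative ones and hence attains the optimal DCG for 0/1 relevance labels given by membership in P. -/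
/-- let `P ⊊ {1,…,N}` be a nonempty set of positive indices with nonempty
complement, let `r` satisfy `γ := min_{j∈P} r_j - max_{j∉P} r_j > 0`, and let `w_j ≥ w₀ > 0`.
If `∑_j w_j (f_j - r_j)² < w₀ γ² / 4`, then `f_j > f_{j'}` for every `j ∈ P` and `j' ∉ P`. -/
theorem weighted_squared_separation (N : ℕ) (hN : 1 ≤ N) (P : Finset (Fin N))
    (hPne : P.Nonempty) (hPcne : Pᶜ.Nonempty) (r w f : Fin N → ℝ) (w0 : ℝ)
    (hw0 : 0 < w0) (hw : ∀ j, w0 ≤ w j)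
    (hgamma : 0 < P.inf' hPne r - Pᶜ.sup' hPcne r)
    (hloss : ∑ j, w j * (f j - r j) ^ 2 < w0 * (P.inf' hPne r - Pᶜ.sup' hPcne r) ^ 2 / 4) :
    ∀ j ∈ P, ∀ j' ∉ P, f j' < f j := by
  set γ := P.inf' hPne r - Pᶜ.sup' hPcne r with hγ
  have hterm : ∀ j : Fin N, (f j - r j) ^ 2 < γ ^ 2 / 4 := by
    intro j
    have hle : w j * (f j - r j) ^ 2 ≤ ∑ i, w i * (f i - r i) ^ 2 :=
      Finset.single_le_sum (f := fun i => w i * (f i - r i) ^ 2) (fun i _ => mul_nonneg ((hw0.trans_le (hw i)).le) (sq_nonneg _))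
        (Finset.mem_univ j)
    have hwj := hw j
    nlinarith [sq_nonneg (f j - r j)]
  intro j hj j' hj'
  have h1 : P.inf' hPne r ≤ r j := Finset.inf'_le _ hj
  have h2 : r j' ≤ Pᶜ.sup' hPcne r := Finset.le_sup' _ (Finset.mem_compl.mpr hj')
  have ha := hterm j
  have hb := hterm j'
  nlinarith [sq_nonneg (f j - r j + (f j' - r j')), sq_nonneg (f j - r j - (f j' - r j'))]
end

section
/- Let N ≥ 1, let m be a real number with 0 < m ≤ N, let c : {1,…,N} → ℝ with c_j ≥ 0, and let β : {1,…,N} → ℝ (Bayes relevance probabilities). Define η_j = (N/m)·β_j − 1 and the RG² conditional surrogate risk Φ(o) = Σ_{j=1}^N (m/(2N)) (o_j − η_j)², whose minimum is Φ* = 0. Let π be a permutation maximizing Σ_j c_{π(j)} o_j among all permutations, and let σ be a permutation maximizing Σ_j c_{σ(j)} β_j. Then the DCG regret satisfies Σ_j c_{σ(j)} β_j − Σ_j c_{π(j)} β_j ≤ 2·( (m/N)·Σ_{j=1}^N c_j² )^{1/2} · ( Φ(o) − Φ* )^{1/2}; i.e., there is an explicit constant C = 2√(m Σ_j c_j² /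 N) with ℒ_DCG(o) − ℒ_DCG* ≤ C (ℒ_RG²(o) − ℒ_RG²*)^{1/2}. -/
/-- let `N ≥ 1`, `0 < m ≤ N`, `c_j ≥ 0` and let `β` be the Bayes relevance
probabilities.  With `η_j = (N/m)β_j - 1` and the RG² conditional surrogate risk
`Φ(o) = ∑_j (m/(2N))(o_j - η_j)²` (whose minimum is `Φ* = 0`), if `π` maximizes
`∑_j c_{π(j)} o_j` among permutations and `σ` maximizes `∑_j c_{σ(j)} β_j`, then the DCG
regret satisfies
`∑_j c_{σ(j)} β_j - ∑_j c_{π(j)} β_j ≤ 2 ((m/N) ∑_j c_j²)^{1/2} (Φ(o) - Φ*)^{1/2}`. -/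
theorem rg2_dcg_consistency (N : ℕ) (hN : 1 ≤ N) (m : ℝ) (hm0 : 0 < m) (hmN : m ≤ N)
    (c beta o : Fin N → ℝ) (hc : ∀ j, 0 ≤ c j)
    (eta : Fin N → ℝ) (heta : ∀ j, eta j = (N / m) * beta j - 1)
    (piPerm sigmaPerm : Equiv.Perm (Fin N))
    (hpi : ∀ tau : Equiv.Perm (Fin N), ∑ j, c (tau j) * o j ≤ ∑ j, c (piPerm j) * o j)
    (hsigma : ∀ tau : Equiv.Perm (Fin N),
      ∑ j, c (tau j) * beta j ≤ ∑ j, c (sigmaPerm j) * beta j) :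
    IsLeast {v : ℝ | ∃ o' : Fin N → ℝ, v = ∑ j, (m / (2 * N)) * (o' j - eta j) ^ 2} 0 ∧
    ∑ j, c (sigmaPerm j) * beta j - ∑ j, c (piPerm j) * beta j ≤
      2 * Real.sqrt ((m / N) * ∑ j, c j ^ 2) *
        Real.sqrt ((∑ j, (m / (2 * N)) * (o j - eta j) ^ 2) - 0) := by
  have hNpos : (0 : ℝ) < N := by positivity
  have hNne : (N : ℝ) ≠ 0 := ne_of_gt hNpos
  have hmne : m ≠ 0 := ne_of_gt hm0
  constructor
  · constructor
    · exact ⟨eta, by simp⟩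
    · rintro v ⟨o', rfl⟩
      apply Finset.sum_nonneg
      intro j _
      positivity
  · set e : Fin N → ℝ := fun j => c (sigmaPerm j) - c (piPerm j) with he
    set C2 : ℝ := ∑ j, c j ^ 2 with hC2
    set S : ℝ := ∑ j, (o j - eta j) ^ 2 with hS
    have hC2nn : 0 ≤ C2 := Finset.sum_nonneg fun j _ => sq_nonneg _
    have hSnn : 0 ≤ S := Finset.sum_nonneg fun j _ => sq_nonneg _
    have hbeta : ∀ j, beta j = (m / N) * (eta j + 1) := by
      intro j; rw [heta]; field_simp; ring
    have hsum0 : ∑ j, e j = 0 := by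
      simp only [he, Finset.sum_sub_distrib]
      rw [Equiv.sum_comp sigmaPerm c, Equiv.sum_comp piPerm c, sub_self]
    -- rewrite the regret
    have h1 : ∑ j, c (sigmaPerm j) * beta j - ∑ j, c (piPerm j) * beta j
        = (m / N) * ∑ j, e j * eta j := by
      have : ∑ j, c (sigmaPerm j) * beta j - ∑ j, c (piPerm j) * beta j
          = (m / N) * (∑ j, e j * eta j + ∑ j, e j) := by
        rw [← Finset.sum_add_distrib, Finset.mul_sum, ← Finset.sum_sub_distrib]
        apply Finset.sum_congr rfl
        intro j _
        rw [hbeta]; simp only [he]; ring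
      rw [this, hsum0, add_zero]
    -- the score comparison
    have h2 : ∑ j, e j * o j ≤ 0 := by
      have hh := hpi sigmaPerm
      have heq : ∑ j, e j * o j = ∑ j, c (sigmaPerm j) * o j - ∑ j, c (piPerm j) * o j := by
        rw [← Finset.sum_sub_distrib]
        apply Finset.sum_congr rfl; intro j _; simp only [he]; ring
      linarith
    have h3 : ∑ j, e j * eta j ≤ ∑ j, e j * (eta j - o j) := by
      have : ∑ j, e j * (eta j - o j) = ∑ j, e j * eta j - ∑ j, e j * o j := by
        rw [← Finset.sum_sub_distrib]; apply Finset.sum_congr rfl; intro j _; ring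
      linarith [this]
    -- Cauchy–Schwarz
    have hE : ∑ j, e j ^ 2 ≤ 2 * C2 := by
      have h1 : ∑ j, c (sigmaPerm j) ^ 2 = C2 := Equiv.sum_comp sigmaPerm fun j => c j ^ 2
      have h2 : ∑ j, c (piPerm j) ^ 2 = C2 := Equiv.sum_comp piPerm fun j => c j ^ 2
      have hle : ∀ j : Fin N, e j ^ 2 ≤ c (sigmaPerm j) ^ 2 + c (piPerm j) ^ 2 := by
        intro j
        have := mul_nonneg (hc (sigmaPerm j)) (hc (piPerm j))
        simp only [he]; nlinarith
      calc ∑ j, e j ^ 2 ≤ ∑ j, (c (sigmaPerm j) ^ 2 + c (piPerm j) ^ 2) :=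
            Finset.sum_le_sum fun j _ => hle j
        _ = 2 * C2 := by rw [Finset.sum_add_distrib, h1, h2]; ring
    have hcs : ∑ j, e j * (eta j - o j) ≤ Real.sqrt (2 * C2 * S) := by
      have hsq : (∑ j, e j * (eta j - o j)) ^ 2 ≤ 2 * C2 * S := by
        have := Finset.sum_mul_sq_le_sq_mul_sq Finset.univ e (fun j => eta j - o j)
        have hSe : ∑ j, (eta j - o j) ^ 2 = S := by
          apply Finset.sum_congr rfl; intro j _; ring
        rw [hSe] at this
        calc (∑ j, e j * (eta j - o j)) ^ 2 ≤ (∑ j, e j ^ 2) * S := this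
          _ ≤ 2 * C2 * S := by nlinarith
      calc ∑ j, e j * (eta j - o j) ≤ |∑ j, e j * (eta j - o j)| := le_abs_self _
        _ = Real.sqrt ((∑ j, e j * (eta j - o j)) ^ 2) := (Real.sqrt_sq_eq_abs _).symm
        _ ≤ Real.sqrt (2 * C2 * S) := Real.sqrt_le_sqrt hsq
    -- identify the RHS
    have hPhi : (∑ j, (m / (2 * N)) * (o j - eta j) ^ 2) - 0 = (m / (2 * N)) * S := by
      rw [sub_zero, ← Finset.mul_sum]
    have hRHS : 2 * Real.sqrt ((m / N) * C2) * Real.sqrt ((m / (2 * N)) * S)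
        = (m / N) * Real.sqrt (2 * C2 * S) := by
      have hmn : (0:ℝ) ≤ m / N := by positivity
      have hs4 : Real.sqrt 4 = 2 := by
        rw [show (4:ℝ) = 2 ^ 2 by norm_num, Real.sqrt_sq (by norm_num : (0:ℝ) ≤ 2)]
      calc 2 * Real.sqrt ((m / N) * C2) * Real.sqrt ((m / (2 * N)) * S)
          = 2 * Real.sqrt ((m / N) * C2 * ((m / (2 * N)) * S)) := by
            rw [mul_assoc, ← Real.sqrt_mul (by positivity)]
        _ = Real.sqrt (4 * ((m / N) * C2 * ((m / (2 * N)) * S))) := by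
            rw [Real.sqrt_mul (by norm_num : (0:ℝ) ≤ 4), hs4]
        _ = Real.sqrt ((m / N) ^ 2 * (2 * C2 * S)) := by
            congr 1; field_simp; ring
        _ = (m / N) * Real.sqrt (2 * C2 * S) := by
            rw [Real.sqrt_mul (by positivity), Real.sqrt_sq hmn]
    rw [hPhi, hRHS, h1]
    have hstep : ∑ j, e j * eta j ≤ Real.sqrt (2 * C2 * S) := le_trans h3 hcs
    have : 0 ≤ m / N := by positivity
    exact mul_le_mul_of_nonneg_left hstep this
end

section
/- Let M, N ≥ 1, let r : {1,…,M}×{1,…,N} → {0,1}, and for each x let I_x = Σ_{y=1}^N r(x,y), assumed to satisfy I_x ≥ 1 for all x. Then for every o : {1,…,M}×{1,…,N} → ℝ the following exact identity holds: Σ_{(x,y): r(x,y)=1} ( −o(x,y) + (1/(2N)) Σ_{y'=1}^N (o(x,y') + 1)² ) = Σ_{x=1}^M Σ_{y=1}^N (I_x/(2N)) ( o(x,y) + 1 − r(x,y)·N/I_x )² + Σ_{x=1}^M I_x − M·N/2. -/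
open scoped Classical

/-- for `r : {1,…,M}×{1,…,N} → {0,1}` with `I_x = ∑_y r(x,y) ≥ 1`, and
any `o`, the realized RG² surrogate summed over the positive pairs equals the weighted
squared loss plus an explicit constant:
`∑_{(x,y): r(x,y)=1} (-o(x,y) + (1/(2N)) ∑_{y'} (o(x,y')+1)²)
  = ∑_x ∑_y (I_x/(2N)) (o(x,y) + 1 - r(x,y) N / I_x)² + ∑_x I_x - M N / 2`. -/
theorem rg2_squared_form_transformation (M N : ℕ) (hM : 1 ≤ M) (hN : 1 ≤ N)
    (r : Fin M → Fin N → ℝ) (hr : ∀ x y, r x y = 0 ∨ r x y = 1)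
    (hI : ∀ x, 1 ≤ ∑ y, r x y) (o : Fin M → Fin N → ℝ) :
    ∑ x, ∑ y ∈ Finset.univ.filter (fun y => r x y = 1),
        (- o x y + (1 / (2 * N)) * ∑ y', (o x y' + 1) ^ 2)
      = (∑ x, ∑ y, ((∑ y', r x y') / (2 * N)) *
            (o x y + 1 - r x y * N / (∑ y', r x y')) ^ 2)
        + (∑ x, ∑ y, r x y) - M * N / 2 := by
  have hN0 : (N : ℝ) ≠ 0 := by
    have : (0:ℝ) < N := by exact_mod_cast hN
    linarith
  have key : ∀ x, ∑ y ∈ Finset.univ.filter (fun y => r x y = 1),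
        (- o x y + (1 / (2 * N)) * ∑ y', (o x y' + 1) ^ 2)
      = (∑ y, ((∑ y', r x y') / (2 * N)) *
            (o x y + 1 - r x y * N / (∑ y', r x y')) ^ 2)
        + (∑ y, r x y) - N / 2 := by
    intro x
    set I : ℝ := ∑ y', r x y' with hIdef
    have hI0 : I ≠ 0 := by have := hI x; rw [← hIdef] at this; linarith
    set S : ℝ := ∑ y', (o x y' + 1) ^ 2 with hSdef
    have hfil : ∀ t : Fin N → ℝ,
        ∑ y ∈ Finset.univ.filter (fun y => r x y = 1), t y = ∑ y, r x y * t y := by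
      intro t
      rw [Finset.sum_filter]
      refine Finset.sum_congr rfl fun y _ => ?_
      rcases hr x y with h | h <;> simp [h]
    rw [hfil]
    have hterm : ∀ y, (I / (2 * N)) * (o x y + 1 - r x y * N / I) ^ 2
        = I / (2 * N) * (o x y + 1) ^ 2 - (o x y + 1) * r x y + r x y * (N / (2 * I)) := by
      intro y
      rcases hr x y with h | h <;> rw [h] <;> field_simp <;> ring
    rw [Finset.sum_congr rfl fun y _ => hterm y]
    have hsplit : ∑ y, (I / (2 * N) * (o x y + 1) ^ 2 - (o x y + 1) * r x y
          + r x y * (N / (2 * I)))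
        = I / (2 * N) * S - (∑ y, (o x y + 1) * r x y) + I * (N / (2 * I)) := by
      rw [Finset.sum_add_distrib, Finset.sum_sub_distrib, ← Finset.mul_sum,
        ← Finset.sum_mul, hSdef, hIdef]
    rw [hsplit]
    have h1 : ∑ y, (o x y + 1) * r x y = (∑ y, o x y * r x y) + I := by
      rw [hIdef, ← Finset.sum_add_distrib]
      exact Finset.sum_congr rfl fun y _ => by ring
    have h2 : ∑ y, r x y * (- o x y + 1 / (2 * N) * S)
        = I * (1 / (2 * N) * S) - ∑ y, o x y * r x y := by
      rw [hIdef, Finset.sum_mul, ← Finset.sum_sub_distrib]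
      exact Finset.sum_congr rfl fun y _ => by ring
    rw [h2, h1]
    have h3 : I * (N / (2 * I)) = N / 2 := by field_simp
    rw [h3]
    ring
  calc ∑ x, ∑ y ∈ Finset.univ.filter (fun y => r x y = 1),
        (- o x y + (1 / (2 * N)) * ∑ y', (o x y' + 1) ^ 2)
      = ∑ x, ((∑ y, ((∑ y', r x y') / (2 * N)) *
            (o x y + 1 - r x y * N / (∑ y', r x y')) ^ 2)
        + (∑ y, r x y) - N / 2) := Finset.sum_congr rfl fun x _ => key x
    _ = _ := by
        rw [Finset.sum_sub_distrib, Finset.sum_add_distrib, Finset.sum_const,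
          Finset.card_univ, Fintype.card_fin]
        push_cast
        ring
end

section
/- Let M, N ≥ 1, let r : {1,…,M}×{1,…,N} → {0,1}, and for each x let I_x = Σ_{y=1}^N r(x,y), assumed to satisfy I_x ≥ 1 for all x. Then for every o : {1,…,M}×{1,…,N} → ℝ the following exact identity holds: Σ_{(x,y): r(x,y)=1} ( −o(x,y) + (1/(2N)) Σ_{y'=1}^N (o(x,y') + 1)² − (1/(2N²)) (Σ_{y'=1}^N o(x,y'))² ) = Σ_{x=1}^M Σ_{y=1}^N (I_x/(2N)) ( ( o(x,y) + 1 − r(x,y)·N/I_x )² − (1/N²) (Σ_{y'=1}^N o(x,y'))² ) + Σ_{x=1}^M I_x − M·N/2. -/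
open scoped Classical

lemma rgx_key (N : ℕ) (hN : 1 ≤ N) (r o : Fin N → ℝ)
    (hr : ∀ y, r y = 0 ∨ r y = 1) (hI : 1 ≤ ∑ y, r y) :
    ∑ y ∈ Finset.univ.filter (fun y => r y = 1),
        (- o y + (1 / (2 * N)) * ∑ y', (o y' + 1) ^ 2
          - (1 / (2 * (N : ℝ) ^ 2)) * (∑ y', o y') ^ 2)
      = (∑ y, ((∑ y', r y') / (2 * N)) *
            ((o y + 1 - r y * N / (∑ y', r y')) ^ 2
              - (1 / (N : ℝ) ^ 2) * (∑ y', o y') ^ 2))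
        + (∑ y, r y) - N / 2 := by
  have hN0 : (N : ℝ) ≠ 0 := by
    have : (1 : ℝ) ≤ N := by exact_mod_cast hN
    linarith
  set I : ℝ := ∑ y, r y with hIdef
  have hI0 : I ≠ 0 := by intro h; rw [h] at hI; linarith
  set S : ℝ := ∑ y', o y' with hS
  set T : ℝ := ∑ y', (o y' + 1) ^ 2 with hT
  set R : ℝ := ∑ y, r y * o y with hRdef
  have hL : ∑ y ∈ Finset.univ.filter (fun y => r y = 1),
      (- o y + (1 / (2 * N)) * T - (1 / (2 * (N:ℝ)^2)) * S ^ 2)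
      = -R + I * ((1 / (2 * N)) * T - (1 / (2 * (N:ℝ)^2)) * S ^ 2) := by
    rw [Finset.sum_filter]
    have h1 : ∀ y ∈ Finset.univ,
        (if r y = 1 then (- o y + (1 / (2 * N)) * T - (1 / (2 * (N:ℝ)^2)) * S ^ 2) else 0)
        = r y * (- o y) + r y * ((1 / (2 * N)) * T - (1 / (2 * (N:ℝ)^2)) * S ^ 2) := by
      intro y _
      rcases hr y with h | h <;> simp [h] <;> ring
    rw [Finset.sum_congr rfl h1, Finset.sum_add_distrib, ← Finset.sum_mul]
    rw [hIdef]
    congr 1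
    rw [hRdef, ← Finset.sum_neg_distrib]
    exact Finset.sum_congr rfl fun y _ => by ring
  rw [hL]
  have hpt : ∀ y ∈ Finset.univ,
      (I / (2 * N)) * ((o y + 1 - r y * N / I) ^ 2 - (1 / (N:ℝ)^2) * S ^ 2)
      = (I / (2 * N)) * (o y + 1) ^ 2 - r y * (o y + 1) + r y * (N / (2 * I))
        - I / (2 * (N:ℝ)^3) * S ^ 2 := by
    intro y _
    rcases hr y with h | h <;> rw [h] <;> field_simp <;> ring
  rw [Finset.sum_congr rfl hpt]
  rw [Finset.sum_sub_distrib, Finset.sum_add_distrib, Finset.sum_sub_distrib,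
    Finset.sum_const, ← Finset.mul_sum, ← Finset.sum_mul, Finset.card_univ,
    Fintype.card_fin]
  have hB : ∑ y, r y * (o y + 1) = R + I := by
    rw [hRdef, hIdef, ← Finset.sum_add_distrib]
    exact Finset.sum_congr rfl fun y _ => by ring
  rw [hB, ← hT, ← hIdef, nsmul_eq_mul]
  field_simp
  ring

/-- for `r : {1,…,M}×{1,…,N} → {0,1}` with `I_x = ∑_y r(x,y) ≥ 1`, and
any `o`, the realized RG× surrogate (with the interaction term retained) summed over the
positive pairs equals the weighted squared loss with interaction correction plus an
explicit constant:
`∑_{(x,y): r(x,y)=1} (-o(x,y) + (1/(2N)) ∑_{y'} (o(x,y')+1)² - (1/(2N²)) (∑_{y'} o(x,y'))²)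
  = ∑_x ∑_y (I_x/(2N)) ((o(x,y) + 1 - r(x,y) N / I_x)² - (1/N²)(∑_{y'} o(x,y'))²)
    + ∑_x I_x - M N / 2`. -/
theorem rgx_squared_form_transformation (M N : ℕ) (hM : 1 ≤ M) (hN : 1 ≤ N)
    (r : Fin M → Fin N → ℝ) (hr : ∀ x y, r x y = 0 ∨ r x y = 1)
    (hI : ∀ x, 1 ≤ ∑ y, r x y) (o : Fin M → Fin N → ℝ) :
    ∑ x, ∑ y ∈ Finset.univ.filter (fun y => r x y = 1),
        (- o x y + (1 / (2 * N)) * ∑ y', (o x y' + 1) ^ 2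
          - (1 / (2 * (N : ℝ) ^ 2)) * (∑ y', o x y') ^ 2)
      = (∑ x, ∑ y, ((∑ y', r x y') / (2 * N)) *
            ((o x y + 1 - r x y * N / (∑ y', r x y')) ^ 2
              - (1 / (N : ℝ) ^ 2) * (∑ y', o x y') ^ 2))
        + (∑ x, ∑ y, r x y) - M * N / 2 := by
  have h : ∀ x ∈ Finset.univ,
      ∑ y ∈ Finset.univ.filter (fun y => r x y = 1),
        (- o x y + (1 / (2 * N)) * ∑ y', (o x y' + 1) ^ 2
          - (1 / (2 * (N : ℝ) ^ 2)) * (∑ y', o x y') ^ 2)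
      = (∑ y, ((∑ y', r x y') / (2 * N)) *
            ((o x y + 1 - r x y * N / (∑ y', r x y')) ^ 2
              - (1 / (N : ℝ) ^ 2) * (∑ y', o x y') ^ 2))
        + (∑ y, r x y) - N / 2 :=
    fun x _ => rgx_key N hN (r x) (o x) (hr x) (hI x)
  rw [Finset.sum_congr rfl h, Finset.sum_sub_distrib, Finset.sum_add_distrib,
    Finset.sum_const, Finset.card_univ, Fintype.card_fin, nsmul_eq_mul]
  ring
end

section
/- Let N ≥ 1, o ∈ ℝ^N, and y ∈ {1,…,N}, and let ρ = |{ j ∈ {1,…,N} : o_j ≥ o_y }| be the rank of y under o (so ρ ≥ 1). Then the softmax probability of y satisfies exp(o_y)/Σ_{j=1}^N exp(o_j) ≤ 1/ρ ≤ 1/log₂(1 + ρ). In particular, for a single relevant item y with NDCG equal to 1/log₂(1 + ρ), the softmax probability is a lower bound on NDCG: log( exp(o_y)/Σ_j exp(o_j) ) ≤ log NDCG, so the softmax loss is an upper bound on mean negative log-NDCG. -/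
open scoped Classical

/-- let `ρ = |{j : o_j ≥ o_y}|` be the rank of `y` under `o`.  Then the
softmax probability of `y` satisfies `exp(o_y)/∑_j exp(o_j) ≤ 1/ρ ≤ 1/log₂(1+ρ)`, and in
particular `log(exp(o_y)/∑_j exp(o_j)) ≤ log(1/log₂(1+ρ))`, i.e. the softmax probability
lower-bounds NDCG `= 1/log₂(1+ρ)` for a single relevant item. -/
theorem softmax_prob_le_inv_rank_le_ndcg (N : ℕ) (hN : 1 ≤ N) (o : Fin N → ℝ)
    (y : Fin N) (rnk : ℕ)
    (hrnk : rnk = (Finset.univ.filter (fun j => o y ≤ o j)).card) :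
    Real.exp (o y) / (∑ j, Real.exp (o j)) ≤ 1 / (rnk : ℝ) ∧
    (1 : ℝ) / (rnk : ℝ) ≤ 1 / Real.logb 2 (1 + (rnk : ℝ)) ∧
    Real.log (Real.exp (o y) / ∑ j, Real.exp (o j)) ≤
      Real.log (1 / Real.logb 2 (1 + (rnk : ℝ))) := by
  set S := (Finset.univ.filter (fun j => o y ≤ o j)) with hS
  have hyS : y ∈ S := by simp [hS]
  have hrpos : 1 ≤ rnk := by
    rw [hrnk]; exact Finset.card_pos.mpr ⟨y, hyS⟩
  have hrposR : (0 : ℝ) < rnk := by exact_mod_cast hrpos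
  have hsumpos : (0 : ℝ) < ∑ j, Real.exp (o j) := by
    apply Finset.sum_pos (fun j _ => Real.exp_pos _)
    exact ⟨y, Finset.mem_univ y⟩
  -- sum ≥ rnk * exp(o y)
  have hsum_ge : (rnk : ℝ) * Real.exp (o y) ≤ ∑ j, Real.exp (o j) := by
    calc (rnk : ℝ) * Real.exp (o y) = ∑ _j ∈ S, Real.exp (o y) := by
          rw [Finset.sum_const, nsmul_eq_mul, hrnk]
      _ ≤ ∑ j ∈ S, Real.exp (o j) := by
          apply Finset.sum_le_sum
          intro j hj
          exact Real.exp_le_exp.mpr (by simpa [hS] using hj)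
      _ ≤ ∑ j, Real.exp (o j) := by
          apply Finset.sum_le_sum_of_subset_of_nonneg (Finset.filter_subset _ _)
          intro j _ _; exact (Real.exp_pos _).le
  have h1 : Real.exp (o y) / (∑ j, Real.exp (o j)) ≤ 1 / (rnk : ℝ) := by
    rw [div_le_div_iff₀ hsumpos hrposR]
    linarith [hsum_ge]
  -- logb 2 (1+rnk) ≤ rnk
  have hlogb_pos : 0 < Real.logb 2 (1 + (rnk : ℝ)) := by
    apply Real.logb_pos (by norm_num)
    linarith
  have hlogb_le : Real.logb 2 (1 + (rnk : ℝ)) ≤ (rnk : ℝ) := by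
    have h2 : (1 : ℝ) + rnk ≤ 2 ^ rnk := by
      have := Nat.lt_two_pow_self (n := rnk)
      have : (rnk : ℝ) + 1 ≤ (2 : ℝ) ^ rnk := by exact_mod_cast this
      linarith
    calc Real.logb 2 (1 + (rnk : ℝ)) ≤ Real.logb 2 ((2:ℝ) ^ rnk) :=
          (Real.logb_le_logb (by norm_num) (by linarith) (by positivity)).mpr h2
      _ = rnk := by
          rw [Real.logb_pow, Real.logb_self_eq_one (by norm_num)]
          ring
  have h2 : (1 : ℝ) / (rnk : ℝ) ≤ 1 / Real.logb 2 (1 + (rnk : ℝ)) :=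
    one_div_le_one_div_of_le hlogb_pos hlogb_le
  refine ⟨h1, h2, ?_⟩
  apply Real.log_le_log (div_pos (Real.exp_pos _) hsumpos)
  exact h1.trans h2
end

section
/- Let N ≥ 1, n ≥ 1, o ∈ ℝ^N, and y ∈ {1,…,N}. If y₁, …, yₙ are drawn i.i.d. uniformly from {1,…,N}, then the expectation of the sampled-softmax Taylor surrogate equals a non-sampling weighted surrogate: E[ −o_y + (1/(2(n+1)))·( (o_y + 1)² + Σ_{k=1}^n (o_{y_k} + 1)² ) ] = −o_y + (1/(2(n+1)))·(o_y + 1)² + (n/(2(n+1)))·(1/N)·Σ_{y'=1}^N (o_{y'} + 1)². In particular, the expected surrogate assigns the positive instance weight 1/(2(n+1)) and every one of the N instances weight n/(2N(n+1)), so the effective ratio of positive to per-item negative weight is determined by the sample size n and catalogue size N. -/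
lemma eval_sum_aux (n N : ℕ) (k : Fin n) (f : Fin N → ℝ) :
    ∑ ys : Fin n → Fin N, f (ys k) = (N:ℝ)^(n-1) * ∑ j, f j := by
  rw [← Equiv.sum_comp (Equiv.piSplitAt k (fun _ => Fin N)).symm (fun ys => f (ys k))]
  simp [Fintype.sum_prod_type, Finset.sum_const, mul_comm, ← Finset.sum_mul]

/-- if `y₁,…,yₙ` are drawn i.i.d. uniformly from `{1,…,N}` (expectation
realized as the average over all tuples in `{1,…,N}ⁿ`), then the expectation of the
sampled-softmax Taylor surrogate equals a non-sampling weighted surrogate: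
`E[-o_y + (1/(2(n+1)))((o_y+1)² + ∑_k (o_{y_k}+1)²)]
  = -o_y + (1/(2(n+1)))(o_y+1)² + (n/(2(n+1))) (1/N) ∑_{y'} (o_{y'}+1)²`. -/
theorem sampled_softmax_surrogate_expectation (N n : ℕ) (hN : 1 ≤ N) (hn : 1 ≤ n)
    (o : Fin N → ℝ) (y : Fin N) :
    (∑ ys : Fin n → Fin N,
        (- o y + (1 / (2 * ((n : ℝ) + 1))) *
          ((o y + 1) ^ 2 + ∑ k, (o (ys k) + 1) ^ 2))) / (N : ℝ) ^ n
      = - o y + (1 / (2 * ((n : ℝ) + 1))) * (o y + 1) ^ 2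
        + ((n : ℝ) / (2 * ((n : ℝ) + 1))) * ((1 / N) * ∑ y', (o y' + 1) ^ 2) := by
  have hNpos : (0:ℝ) < N := by exact_mod_cast hN
  set c : ℝ := 1 / (2 * ((n : ℝ) + 1)) with hc
  set S : ℝ := ∑ y', (o y' + 1) ^ 2 with hS
  have hsum : (∑ ys : Fin n → Fin N, ∑ k, (o (ys k) + 1) ^ 2)
      = (n : ℝ) * (N:ℝ)^(n-1) * S := by
    rw [Finset.sum_comm]
    have h1 : ∀ k : Fin n, (∑ ys : Fin n → Fin N, (o (ys k) + 1) ^ 2)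
        = (N:ℝ)^(n-1) * S := fun k => eval_sum_aux n N k (fun j => (o j + 1)^2)
    simp only [h1]
    rw [Finset.sum_const, Finset.card_univ, Fintype.card_fin, nsmul_eq_mul]
    ring
  have hcard : (Fintype.card (Fin n → Fin N) : ℝ) = (N:ℝ)^n := by simp
  have hnum : (∑ ys : Fin n → Fin N,
        (- o y + c * ((o y + 1) ^ 2 + ∑ k, (o (ys k) + 1) ^ 2)))
      = (N:ℝ)^n * (- o y + c * (o y + 1)^2) + c * ((n : ℝ) * (N:ℝ)^(n-1) * S) := by
    simp only [mul_add, Finset.sum_add_distrib, ← Finset.mul_sum, hsum,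
      Finset.sum_const, Finset.card_univ, nsmul_eq_mul, hcard]
    ring
  rw [hnum]
  have hNn : ((N:ℝ)^n) ≠ 0 := by positivity
  have hpow : (N:ℝ)^n = (N:ℝ)^(n-1) * N := by
    rw [← pow_succ]; congr 1; omega
  have h2 : (2 * ((n:ℝ) + 1)) ≠ 0 := by positivity
  rw [div_eq_iff hNn, hc, hpow]
  field_simp
end

section
/- Let M, N, K ≥ 1, let W be an M×M real diagonal matrix with strictly positive diagonal entries, let λ > 0, let S be a real M×N matrix, and let Q be a real N×K matrix such that Qᵀ Q is invertible. Define L : ℝ^{M×K} → ℝ by L(P) = tr( (S − P Qᵀ)ᵀ W (S − P Qᵀ) ) + λ ‖P Qᵀ‖_F². Then: (i) a matrix P satisfies the stationarity equation (W + λ I_M) P (Qᵀ Q) = W S Q if and only if P = (W + λ I_M)^{-1} W S Q (Qᵀ Q)^{-1}; and (ii) P₀ = (W + λ I_M)^{-1} W S Q (Qᵀ Q)^{-1} is the unique global minimizer of L. -/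
open Matrix


lemma frob_sq_eq_trace {m k : Type*} [Fintype m] [Fintype k]
    (X : Matrix m k ℝ) : ∑ x, ∑ y, (X x y) ^ 2 = Matrix.trace (Xᵀ * X) := by
  simp only [Matrix.trace, Matrix.diag, Matrix.mul_apply, Matrix.transpose_apply, sq]
  rw [Finset.sum_comm]

/-- for a diagonal `W` with strictly positive diagonal, `λ > 0`, and `Q`
with `Qᵀ Q` invertible, consider
`L(P) = tr((S - PQᵀ)ᵀ W (S - PQᵀ)) + λ ‖PQᵀ‖_F²`.  Then
(i) `P` satisfies the stationarity equation `(W + λ I_M) P (Qᵀ Q) = W S Q` iff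
`P = (W + λ I_M)⁻¹ W S Q (Qᵀ Q)⁻¹`; and
(ii) `P₀ = (W + λ I_M)⁻¹ W S Q (Qᵀ Q)⁻¹` is the unique global minimizer of `L`. -/
theorem als_matrix_update_unique_minimizer (M N K : ℕ) (hM : 1 ≤ M) (hN : 1 ≤ N)
    (hK : 1 ≤ K) (d : Fin M → ℝ) (hd : ∀ x, 0 < d x) (lam : ℝ) (hlam : 0 < lam)
    (S : Matrix (Fin M) (Fin N) ℝ) (Q : Matrix (Fin N) (Fin K) ℝ)
    (hQ : IsUnit (Qᵀ * Q)) :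
    letI W : Matrix (Fin M) (Fin M) ℝ := Matrix.diagonal d
    letI L : Matrix (Fin M) (Fin K) ℝ → ℝ := fun P =>
      Matrix.trace ((S - P * Qᵀ)ᵀ * W * (S - P * Qᵀ))
        + lam * ∑ x, ∑ y, ((P * Qᵀ) x y) ^ 2
    letI P0 : Matrix (Fin M) (Fin K) ℝ :=
      (W + lam • (1 : Matrix (Fin M) (Fin M) ℝ))⁻¹ * W * S * Q * (Qᵀ * Q)⁻¹
    (∀ P : Matrix (Fin M) (Fin K) ℝ,
        (W + lam • (1 : Matrix (Fin M) (Fin M) ℝ)) * P * (Qᵀ * Q) = W * S * Q ↔ P = P0) ∧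
    (∀ P : Matrix (Fin M) (Fin K) ℝ, P ≠ P0 → L P0 < L P) := by
  set W : Matrix (Fin M) (Fin M) ℝ := Matrix.diagonal d with hWdef
  set A : Matrix (Fin M) (Fin M) ℝ := W + lam • (1 : Matrix (Fin M) (Fin M) ℝ) with hAdef
  set G : Matrix (Fin K) (Fin K) ℝ := Qᵀ * Q with hGdef
  set P0 : Matrix (Fin M) (Fin K) ℝ := A⁻¹ * W * S * Q * G⁻¹ with hP0def
  have hAdiag : A = Matrix.diagonal (fun i => d i + lam) := by
    rw [hAdef, hWdef, smul_one_eq_diagonal, ← diagonal_add]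
  have hAdet : IsUnit A.det := by
    rw [hAdiag, Matrix.det_diagonal]
    exact isUnit_iff_ne_zero.mpr
      (ne_of_gt (Finset.prod_pos fun i _ => by have := hd i; positivity))
  have hGdet : IsUnit G.det := (Matrix.isUnit_iff_isUnit_det G).mp hQ
  have part1 : ∀ P : Matrix (Fin M) (Fin K) ℝ, A * P * G = W * S * Q ↔ P = P0 := by
    intro P
    constructor
    · intro h
      calc P = A⁻¹ * (A * P * G) * G⁻¹ := by
              rw [Matrix.mul_assoc A P G, Matrix.nonsing_inv_mul_cancel_left _ _ hAdet,
                Matrix.mul_nonsing_inv_cancel_right _ _ hGdet]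
        _ = P0 := by rw [h, hP0def]; simp only [Matrix.mul_assoc]
    · rintro rfl
      rw [hP0def, Matrix.mul_assoc A _ G, Matrix.nonsing_inv_mul_cancel_right _ _ hGdet]
      simp only [← Matrix.mul_assoc]
      rw [Matrix.mul_nonsing_inv _ hAdet, Matrix.one_mul]
  refine ⟨part1, ?_⟩
  have hstat : A * P0 * G = W * S * Q := (part1 P0).mpr rfl
  intro P hP
  simp only []
  set E : Matrix (Fin M) (Fin K) ℝ := P - P0 with hEdef
  set F : Matrix (Fin M) (Fin N) ℝ := E * Qᵀ with hFdef
  have hF0 : F ≠ 0 := by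
    intro h
    apply hP
    have hEG : E * G = 0 := by
      rw [hGdef, ← Matrix.mul_assoc, ← hFdef, h, Matrix.zero_mul]
    have hE : E = 0 := by
      have h2 := congrArg (fun X => X * G⁻¹) hEG
      simpa [Matrix.mul_assoc, Matrix.mul_nonsing_inv _ hGdet] using h2
    rw [hEdef, sub_eq_zero] at hE
    exact hE
  set X0 : Matrix (Fin M) (Fin N) ℝ := P0 * Qᵀ with hX0def
  set R : Matrix (Fin M) (Fin N) ℝ := S - X0 with hRdef
  have hPQ : P * Qᵀ = X0 + F := by
    rw [hX0def, hFdef, hEdef, Matrix.sub_mul]; abel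
  have hFT : Fᵀ = Q * Eᵀ := by rw [hFdef, transpose_mul, transpose_transpose]
  have hkey : ∀ C : Matrix (Fin M) (Fin N) ℝ,
      trace (Fᵀ * C) = trace (Eᵀ * (C * Q)) := by
    intro C
    rw [hFT, Matrix.mul_assoc, trace_mul_comm, Matrix.mul_assoc]
  -- cross term vanishes
  have hzero : lam • (X0 * Q) - W * R * Q = 0 := by
    have h2 := hstat
    rw [hAdef, hGdef] at h2
    rw [hRdef, hX0def]
    simp only [Matrix.add_mul, Matrix.smul_mul, Matrix.one_mul, Matrix.mul_sub,
      Matrix.sub_mul, Matrix.mul_assoc] at h2 ⊢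
    rw [sub_eq_zero, ← h2]
    abel
  have hcross : lam * trace (Fᵀ * X0) - trace (Fᵀ * (W * R)) = 0 := by
    rw [hkey, hkey, ← smul_eq_mul, ← trace_smul, ← trace_sub, ← Matrix.mul_smul,
      ← Matrix.mul_sub, hzero, Matrix.mul_zero, trace_zero]
  -- symmetry facts
  have hWT : Wᵀ = W := by rw [hWdef, Matrix.diagonal_transpose]
  have hsymm1 : trace (Rᵀ * (W * F)) = trace (Fᵀ * (W * R)) := by
    rw [← trace_transpose (Rᵀ * (W * F))]
    simp [Matrix.transpose_mul, hWT, Matrix.mul_assoc]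
  have hsymm2 : trace (X0ᵀ * F) = trace (Fᵀ * X0) := by
    rw [← trace_transpose (X0ᵀ * F)]
    simp [Matrix.transpose_mul]
  -- expansion
  have hexpand :
      trace ((S - P * Qᵀ)ᵀ * W * (S - P * Qᵀ)) + lam * ∑ x, ∑ y, ((P * Qᵀ) x y) ^ 2
      = (trace ((S - P0 * Qᵀ)ᵀ * W * (S - P0 * Qᵀ)) + lam * ∑ x, ∑ y, ((P0 * Qᵀ) x y) ^ 2)
        + (trace (Fᵀ * (W * F)) + lam * trace (Fᵀ * F))
        + 2 * (lam * trace (Fᵀ * X0) - trace (Fᵀ * (W * R))) := by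
    rw [frob_sq_eq_trace, frob_sq_eq_trace, hPQ]
    have hSX : S - (X0 + F) = R - F := by rw [hRdef]; abel
    have hSX0 : S - P0 * Qᵀ = R := by rw [hRdef, hX0def]
    rw [hSX, hSX0]
    simp only [Matrix.transpose_sub, Matrix.transpose_add, Matrix.sub_mul, Matrix.mul_sub,
      Matrix.add_mul, Matrix.mul_add, Matrix.trace_sub, Matrix.trace_add, Matrix.mul_assoc]
    rw [hsymm1, hsymm2]
    ring
  -- positivity of quadratic part
  have hq1 : trace (Fᵀ * (W * F)) = ∑ j, ∑ i, d i * F i j ^ 2 := by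
    simp only [hWdef, Matrix.trace, Matrix.diag, Matrix.mul_apply, Matrix.transpose_apply,
      Matrix.diagonal_apply, ite_mul, zero_mul, Finset.sum_ite_eq, Finset.mem_univ, if_true]
    exact Finset.sum_congr rfl fun j _ => Finset.sum_congr rfl fun i _ => by ring
  have hq2 : 0 < trace (Fᵀ * F) := by
    rw [← frob_sq_eq_trace]
    obtain ⟨i, j, hij⟩ : ∃ i j, F i j ≠ 0 := by
      by_contra h; push_neg at h
      exact hF0 (Matrix.ext fun i j => by simpa using h i j)
    refine Finset.sum_pos' (fun _ _ => Finset.sum_nonneg fun _ _ => sq_nonneg _)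
      ⟨i, Finset.mem_univ i, Finset.sum_pos'
        (fun _ _ => sq_nonneg _) ⟨j, Finset.mem_univ j, by positivity⟩⟩
  have hq3 : 0 ≤ trace (Fᵀ * (W * F)) := by
    rw [hq1]
    refine Finset.sum_nonneg fun j _ => Finset.sum_nonneg fun i _ => ?_
    have := (hd i).le
    positivity
  have : trace ((S - P0 * Qᵀ)ᵀ * W * (S - P0 * Qᵀ)) + lam * ∑ x, ∑ y, ((P0 * Qᵀ) x y) ^ 2
      < trace ((S - P * Qᵀ)ᵀ * W * (S - P * Qᵀ)) + lam * ∑ x, ∑ y, ((P * Qᵀ) x y) ^ 2 := by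
    rw [hexpand, hcross]
    nlinarith [mul_pos hlam hq2]
  exact this
end
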